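/- Suppose a graph G admits a partition of its vertex set into disjoint independent sets S_1, ..., S_k such that (a) the distribution (|S_i|/n) has entropy H' that is a lower bound on the minimum coloring entropy of G, and (b) each S_i induces a bipartite graph. Then G admits a proper coloring with entropy at most OPT + 1, where OPT is the minimum entropy of a proper coloring of G. -/

import Mathlib

open scoped BigOperators

set_option maxHeartbeats 1000000

lemma split_ent (x y : ℝ) (hx : 0 ≤ x) (hy : 0 ≤ y) :
    (x + y) * Real.logb 2 (x + y) - (x + y) ≤
      x * Real.logb 2 x + y * Real.logb 2 y := by
  rcases hx.eq_or_lt with rfl | hx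
  · simpa using hy
  rcases hy.eq_or_lt with rfl | hy
  · simpa using hx.le
  have hs : 0 < x + y := by linarith
  set t : ℝ := x / (x + y) with ht
  have ht0 : 0 < t := div_pos hx hs
  have ht1 : t < 1 := (div_lt_one hs).2 (by linarith)
  have hxt : x = (x + y) * t := by rw [ht]; field_simp
  have hyt : y = (x + y) * (1 - t) := by rw [ht]; field_simp; ring
  have hE : -1 ≤ t * Real.logb 2 t + (1 - t) * Real.logb 2 (1 - t) := by
    have hb := Real.binEntropy_le_log_two (p := t)
    rw [Real.binEntropy, Real.log_inv, Real.log_inv] at hb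
    have hlog2 : (0:ℝ) < Real.log 2 := Real.log_pos (by norm_num)
    rw [Real.logb, Real.logb]
    rw [← sub_nonneg]
    have : t * (Real.log t / Real.log 2) + (1 - t) * (Real.log (1 - t) / Real.log 2) - (-1)
        = (Real.log 2 - (t * -Real.log t + (1 - t) * -Real.log (1 - t))) / Real.log 2 := by
      field_simp; ring
    rw [this]
    apply div_nonneg (by linarith) hlog2.le
  have hlx : Real.logb 2 x = Real.logb 2 (x + y) + Real.logb 2 t := by
    rw [← Real.logb_mul hs.ne' ht0.ne', ← hxt]
  have hly : Real.logb 2 y = Real.logb 2 (x + y) + Real.logb 2 (1 - t) := by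
    rw [← Real.logb_mul hs.ne' (by linarith : (1:ℝ) - t ≠ 0), ← hyt]
  have key : x * Real.logb 2 x + y * Real.logb 2 y
      = (x + y) * Real.logb 2 (x + y)
        + (x + y) * (t * Real.logb 2 t + (1 - t) * Real.logb 2 (1 - t)) := by
    rw [hlx, hly]
    have e1 : x * (Real.logb 2 (x+y) + Real.logb 2 t) = x * Real.logb 2 (x+y) + ((x+y)*t) * Real.logb 2 t := by
      rw [← hxt]; ring
    have e2 : y * (Real.logb 2 (x+y) + Real.logb 2 (1-t)) = y * Real.logb 2 (x+y) + ((x+y)*(1-t)) * Real.logb 2 (1-t) := by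
      rw [← hyt]; ring
    rw [e1, e2]; ring
  nlinarith [mul_le_mul_of_nonneg_left hE hs.le]

theorem stmt_16 {V : Type*} [Fintype V] [DecidableEq V] [Nonempty V]
    (G : SimpleGraph V) (n : ℕ) (hn : n = Fintype.card V)
    (k : ℕ) (S : Fin k → Finset V)
    (hdisj : ∀ i j, i ≠ j → Disjoint (S i) (S j))
    (hpart : ∀ v : V, ∃ i, v ∈ S i)
    (H' : ℝ)
    (hH' : H' = -∑ i : Fin k, (((S i).card : ℝ) / n) * Real.logb 2 (((S i).card : ℝ) / n))
    (hlb : ∀ ψ : V → ℕ, (∀ a b, G.Adj a b → ψ a ≠ ψ b) →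
      H' ≤ -∑ c ∈ Finset.univ.image ψ,
        (((Finset.univ.filter (fun v => ψ v = c)).card : ℝ) / n) *
          Real.logb 2 (((Finset.univ.filter (fun v => ψ v = c)).card : ℝ) / n))
    (hbip : ∀ i, ∃ b : V → Bool, ∀ a ∈ S i, ∀ a' ∈ S i, G.Adj a a' → b a ≠ b a') :
    ∃ φ : V → ℕ, (∀ a b, G.Adj a b → φ a ≠ φ b) ∧
      ∀ ψ : V → ℕ, (∀ a b, G.Adj a b → ψ a ≠ ψ b) →
        -∑ c ∈ Finset.univ.image φ,
            (((Finset.univ.filter (fun v => φ v = c)).card : ℝ) / n) *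
              Real.logb 2 (((Finset.univ.filter (fun v => φ v = c)).card : ℝ) / n)
          ≤ (-∑ c ∈ Finset.univ.image ψ,
              (((Finset.univ.filter (fun v => ψ v = c)).card : ℝ) / n) *
                Real.logb 2 (((Finset.univ.filter (fun v => ψ v = c)).card : ℝ) / n)) + 1 := by
  classical
  set f : V → Fin k := fun v => (hpart v).choose with hf
  have hfmem : ∀ v, v ∈ S (f v) := fun v => (hpart v).choose_spec
  have huniq : ∀ v i, v ∈ S i → f v = i := by
    intro v i hvi
    by_contra h
    exact (Finset.disjoint_left.1 (hdisj (f v) i h)) (hfmem v) hvi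
  set B : Fin k → V → Bool := fun i => (hbip i).choose with hB
  have hBspec : ∀ i, ∀ a ∈ S i, ∀ a' ∈ S i, G.Adj a a' → B i a ≠ B i a' :=
    fun i => (hbip i).choose_spec
  set e : Fin k × Bool → ℕ := fun p => 2 * (p.1 : ℕ) + (if p.2 then 1 else 0) with he
  have heinj : Function.Injective e := by
    rintro ⟨i, b⟩ ⟨j, c⟩ h
    simp only [he] at h
    have h1 : (i : ℕ) = j ∧ b = c := by
      rcases b <;> rcases c <;> simp_all <;> omega
    exact Prod.ext (Fin.ext h1.1) h1.2
  set φ : V → ℕ := fun v => e (f v, B (f v) v) with hφ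
  have hproper : ∀ a b, G.Adj a b → φ a ≠ φ b := by
    intro a b hab h
    have h2 : (f a, B (f a) a) = (f b, B (f b) b) := heinj h
    have hfa : f a = f b := (Prod.ext_iff.1 h2).1
    have hmb : b ∈ S (f a) := hfa ▸ hfmem b
    have := hBspec (f a) a (hfmem a) b hmb hab
    injection h2 with h3 h4
    rw [h4, hfa] at this
    exact this rfl
  refine ⟨φ, hproper, fun ψ hψ => ?_⟩
  have hn0 : 0 < n := by rw [hn]; exact Fintype.card_pos
  have hnR : (0:ℝ) < n := by exact_mod_cast hn0
  -- fiber description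
  have hfS : ∀ i, Finset.univ.filter (fun v => f v = i) = S i := by
    intro i; ext v
    simp only [Finset.mem_filter, Finset.mem_univ, true_and]
    exact ⟨fun h => h ▸ hfmem v, fun h => huniq v i h⟩
  have hfib : ∀ (i : Fin k) (b : Bool),
      Finset.univ.filter (fun v => φ v = e (i, b))
        = Finset.univ.filter (fun v => f v = i ∧ B i v = b) := by
    intro i b
    ext v
    simp only [Finset.mem_filter, Finset.mem_univ, true_and, hφ]
    constructor
    · intro h
      have h2 := heinj h
      injection h2 with h3 h4
      exact ⟨h3, h3 ▸ h4⟩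
    · rintro ⟨h3, h4⟩
      rw [h3, h4]
  have hcard : ∀ i : Fin k,
      (Finset.univ.filter (fun v => φ v = e (i, false))).card
        + (Finset.univ.filter (fun v => φ v = e (i, true))).card = (S i).card := by
    intro i
    rw [hfib i false, hfib i true, ← hfS i]
    have h1 : (Finset.univ.filter (fun v => f v = i)).filter (fun v => B i v = true)
        = Finset.univ.filter (fun v => f v = i ∧ B i v = true) := by
      rw [Finset.filter_filter]
    have h2 : (Finset.univ.filter (fun v => f v = i)).filter (fun v => ¬ (B i v = true))
        = Finset.univ.filter (fun v => f v = i ∧ B i v = false) := by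
      rw [Finset.filter_filter]
      congr 1; ext v; simp [Bool.not_eq_true]
    have := Finset.card_filter_add_card_filter_not
      (s := Finset.univ.filter (fun v => f v = i)) (p := fun v => B i v = true)
    rw [h1, h2] at this
    omega
  set g : ℕ → ℝ := fun m => ((m : ℝ) / n) * Real.logb 2 ((m : ℝ) / n) with hg
  -- sum over image φ equals sum over all pairs
  have himg : Finset.univ.image φ ⊆ Finset.univ.image e := by
    intro c hc
    obtain ⟨v, _, rfl⟩ := Finset.mem_image.1 hc
    exact Finset.mem_image.2 ⟨(f v, B (f v) v), Finset.mem_univ _, rfl⟩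
  have hsum1 : ∑ c ∈ Finset.univ.image φ, g (Finset.univ.filter (fun v => φ v = c)).card
      = ∑ c ∈ Finset.univ.image e, g (Finset.univ.filter (fun v => φ v = c)).card := by
    apply Finset.sum_subset himg
    intro c _ hc
    have : Finset.univ.filter (fun v => φ v = c) = ∅ := by
      ext v
      simp only [Finset.mem_filter, Finset.mem_univ, true_and, Finset.notMem_empty, iff_false]
      intro h
      exact hc (Finset.mem_image.2 ⟨v, Finset.mem_univ _, h⟩)
    rw [this]
    simp [hg]
  have hsum2 : ∑ c ∈ Finset.univ.image e, g (Finset.univ.filter (fun v => φ v = c)).card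
      = ∑ p : Fin k × Bool, g (Finset.univ.filter (fun v => φ v = e p)).card :=
    Finset.sum_image (fun p _ q _ h => heinj h)
  have hsum3 : ∑ p : Fin k × Bool, g (Finset.univ.filter (fun v => φ v = e p)).card
      = ∑ i : Fin k, (g (Finset.univ.filter (fun v => φ v = e (i, false))).card
          + g (Finset.univ.filter (fun v => φ v = e (i, true))).card) := by
    rw [Fintype.sum_prod_type]
    congr 1; ext i
    rw [Fintype.sum_bool]; ring
  -- total count
  have htot : ∑ i : Fin k, (S i).card = n := by
    have hbu : Finset.univ.biUnion S = Finset.univ := by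
      ext v
      simp only [Finset.mem_biUnion, Finset.mem_univ, true_and, iff_true]
      exact hpart v
    have := Finset.card_biUnion (s := (Finset.univ : Finset (Fin k))) (t := S)
      (fun i _ j _ hij => hdisj i j hij)
    rw [hbu, Finset.card_univ, ← hn] at this
    omega
  have hsump : ∑ i : Fin k, ((S i).card : ℝ) / n = 1 := by
    rw [← Finset.sum_div]
    rw [show ∑ i : Fin k, ((S i).card : ℝ) = (n : ℝ) by exact_mod_cast congrArg Nat.cast htot]
    exact div_self hnR.ne'
  -- per-class bound
  have hbound : ∀ i : Fin k,
      g (S i).card - ((S i).card : ℝ) / n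
        ≤ g (Finset.univ.filter (fun v => φ v = e (i, false))).card
          + g (Finset.univ.filter (fun v => φ v = e (i, true))).card := by
    intro i
    set a : ℝ := ((Finset.univ.filter (fun v => φ v = e (i, false))).card : ℝ) / n with ha
    set b : ℝ := ((Finset.univ.filter (fun v => φ v = e (i, true))).card : ℝ) / n with hb'
    have habs : a + b = ((S i).card : ℝ) / n := by
      rw [ha, hb', ← add_div, ← Nat.cast_add, hcard i]
    have := split_ent a b (div_nonneg (Nat.cast_nonneg _) hnR.le)
      (div_nonneg (Nat.cast_nonneg _) hnR.le)
    rw [habs] at this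
    simpa [hg, ha, hb'] using this
  -- combine
  have hent : -∑ c ∈ Finset.univ.image φ, g (Finset.univ.filter (fun v => φ v = c)).card
      ≤ H' + 1 := by
    rw [hsum1, hsum2, hsum3]
    have hs : ∑ i : Fin k, (g (S i).card - ((S i).card : ℝ) / n)
        ≤ ∑ i : Fin k, (g (Finset.univ.filter (fun v => φ v = e (i, false))).card
          + g (Finset.univ.filter (fun v => φ v = e (i, true))).card) :=
      Finset.sum_le_sum (fun i _ => hbound i)
    rw [Finset.sum_sub_distrib, hsump] at hs
    have hH'' : ∑ i : Fin k, g (S i).card = -H' := by rw [hH']; simp [hg]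
    rw [hH''] at hs
    linarith
  calc -∑ c ∈ Finset.univ.image φ,
        (((Finset.univ.filter (fun v => φ v = c)).card : ℝ) / n) *
          Real.logb 2 (((Finset.univ.filter (fun v => φ v = c)).card : ℝ) / n)
      ≤ H' + 1 := hent
    _ ≤ _ := by linarith [hlb ψ hψ]
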